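/- Let p ≥ 3 be a prime, k ∈ ℕ₊ with p²(p−1) | k, and r ∈ {1,…,p−2}. Then there exist infinitely many n ∈ ℕ₊ such that ν_p( A_{p,k−r}(n) ) ≥ ν_p(k). -/

import Mathlib

open PowerSeries Finset

/-- The number of digits equal to `i` in the base-`p` representation of `n`. -/
def Np (p i n : ℕ) : ℕ := (Nat.digits p n).count i

/-- `Dcoef p r n` is the coefficient of `x^n` in `∏_{i=0}^∞ (1 - x^{p^i})^r`.
Since `p ≥ 2`, the factors with index `i > n` do not affect the coefficient of `x^n`,
so the product may be truncated at `i = n`. -/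
noncomputable def Dcoef (p r n : ℕ) : ℤ :=
  PowerSeries.coeff (R := ℤ) n (∏ i ∈ Finset.range (n + 1), (1 - PowerSeries.X ^ p ^ i) ^ r)

/-- `Dp p n = D_{p,p-1}(n)`. -/
noncomputable def Dp (p n : ℕ) : ℤ := Dcoef p (p - 1) n

/-- `Acoef m k n` is the coefficient of `x^n` in `∏_{i=0}^∞ (1 - x^{m^i})^{-k}`,
the number of `k`-colored `m`-ary partitions of `n`.  Here `(1 - X^{m^i})⁻¹` is
realized as `PowerSeries.invOfUnit (1 - X ^ m ^ i) 1`, and since `m ≥ 2` the factors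
with index `i > n` do not affect the coefficient of `x^n`. -/
noncomputable def Acoef (m k n : ℕ) : ℤ :=
  PowerSeries.coeff (R := ℤ) n
    (∏ i ∈ Finset.range (n + 1),
      (PowerSeries.invOfUnit (1 - PowerSeries.X ^ m ^ i) 1) ^ k)

section Aux

variable {A : Type*} [CommRing A]

/-- The geometric series `∑_j X^{d j}`, the inverse of `1 - X^d`. -/
noncomputable def geo (A : Type*) [CommRing A] (d : ℕ) : PowerSeries A :=
  PowerSeries.mk fun m => if d ∣ m then 1 else 0

lemma one_sub_mul_geo (d : ℕ) (hd : 0 < d) : ((1 - X ^ d) * geo A d) = 1 := by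
  ext m
  rw [sub_mul, one_mul, map_sub, coeff_X_pow_mul']
  simp only [geo, coeff_mk, coeff_one]
  rcases eq_or_ne m 0 with rfl | hm
  · simp [Nat.le_zero, hd.ne']
  · rw [if_neg hm]
    by_cases hdm : d ∣ m
    · rw [if_pos hdm, if_pos (Nat.le_of_dvd (Nat.pos_of_ne_zero hm) hdm),
        if_pos ((Nat.dvd_sub hdm dvd_rfl)), sub_self]
    · rw [if_neg hdm]
      by_cases hle : d ≤ m
      · rw [if_pos hle, if_neg, sub_zero]
        intro h
        exact hdm (by simpa [Nat.sub_add_cancel hle] using Nat.dvd_add h dvd_rfl)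
      · rw [if_neg hle, sub_zero]

lemma invOfUnit_eq_geo (d : ℕ) (hd : 0 < d) :
    invOfUnit (1 - X ^ d : A⟦X⟧) 1 = geo A d := by
  have h1 : ((1 - X ^ d : A⟦X⟧)) * invOfUnit (1 - X ^ d) 1 = 1 := by
    apply mul_invOfUnit
    simp [zero_pow hd.ne', Units.val_one]
  calc invOfUnit (1 - X ^ d : A⟦X⟧) 1
      = ((1 - X ^ d) * geo A d) * invOfUnit (1 - X ^ d) 1 := by
        rw [one_sub_mul_geo d hd, one_mul]
    _ = geo A d * (((1 - X ^ d)) * invOfUnit (1 - X ^ d) 1) := by ring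
    _ = geo A d := by rw [h1, mul_one]

lemma map_geo {B : Type*} [CommRing B] (φ : A →+* B) (d : ℕ) :
    PowerSeries.map φ (geo A d) = geo B d := by
  ext m
  rw [coeff_map]
  simp only [geo, coeff_mk]
  split_ifs <;> simp

lemma coeff_geo_one_pow (K m : ℕ) :
    coeff (R := A) m (geo A 1 ^ (K + 1)) = ((m + K).choose m : A) := by
  induction K generalizing m with
  | zero => simp [geo, coeff_mk]
  | succ K ih =>
    rw [pow_succ, coeff_mul]
    have h1 : ∀ x ∈ antidiagonal m,
        coeff (R := A) x.1 (geo A 1 ^ (K + 1)) * coeff (R := A) x.2 (geo A 1)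
          = ((x.1 + K).choose x.1 : A) := by
      intro x hx
      rw [ih, geo, coeff_mk, if_pos (one_dvd _), mul_one]
    rw [Finset.sum_congr rfl h1, Finset.Nat.sum_antidiagonal_eq_sum_range_succ_mk]
    have hnat : ∑ a ∈ range (m + 1), ((a + K).choose a) = (m + (K + 1)).choose m := by
      have key : ∀ M : ℕ, ∑ a ∈ range (M + 1), ((a + K).choose a) = (M + K + 1).choose M := by
        intro M
        induction M with
        | zero => simp
        | succ M ihM =>
          have e : M + 1 + K = M + K + 1 := by omega
          rw [Finset.sum_range_succ, ihM, e]
          exact (Nat.choose_succ_succ _ _).symm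
      have e2 : m + (K + 1) = m + K + 1 := by omega
      rw [e2]
      exact key m
    calc ∑ a ∈ range (m + 1), (((a, m - a).1 + K).choose (a, m - a).1 : A)
        = ∑ a ∈ range (m + 1), (((a + K).choose a : ℕ) : A) := by simp
      _ = (((m + (K + 1)).choose m : ℕ) : A) := by rw [← Nat.cast_sum, hnat]

lemma coeff_one_sub_X_pow {a r : ℕ} (h : r < a) : coeff (R := A) a ((1 - X) ^ r) = 0 := by
  induction r generalizing a with
  | zero => rw [pow_zero, coeff_one, if_neg (by omega)]
  | succ r ih =>
    rw [pow_succ, mul_sub, mul_one, map_sub, ih (by omega)]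
    obtain ⟨b, rfl⟩ : ∃ b, a = b + 1 := ⟨a - 1, by omega⟩
    rw [coeff_succ_mul_X, ih (by omega), sub_zero]

/-- Being supported on multiples of `p`. -/
def PSupp (p : ℕ) (f : A⟦X⟧) : Prop := ∀ m : ℕ, ¬ p ∣ m → coeff (R := A) m f = 0

lemma PSupp.one (p : ℕ) : PSupp p (1 : A⟦X⟧) := by
  intro m hm
  rw [coeff_one, if_neg]
  rintro rfl
  exact hm (dvd_zero p)

lemma PSupp.mul {p : ℕ} {f g : A⟦X⟧} (hf : PSupp p f) (hg : PSupp p g) :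
    PSupp p (f * g) := by
  intro m hm
  rw [coeff_mul]
  apply Finset.sum_eq_zero
  rintro ⟨a, b⟩ hab
  rw [HasAntidiagonal.mem_antidiagonal] at hab
  by_cases ha : p ∣ a
  · have hb : ¬ p ∣ b := fun h => hm (hab ▸ dvd_add ha h)
    rw [hg b hb, mul_zero]
  · rw [hf a ha, zero_mul]

lemma PSupp.pow {p : ℕ} {f : A⟦X⟧} (hf : PSupp p f) (K : ℕ) : PSupp p (f ^ K) := by
  induction K with
  | zero => simpa using PSupp.one p
  | succ K ih => rw [pow_succ]; exact ih.mul hf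

lemma PSupp.geo_pow {p d : ℕ} (hd : p ∣ d) : PSupp p (geo A d) := by
  intro m hm
  rw [geo, coeff_mk, if_neg]
  exact fun h => hm (hd.trans h)

end Aux

lemma key_dvd (p k r : ℕ) (hp : p.Prime) (hp3 : 3 ≤ p) (hrk : r ≤ k) (hk1 : 1 ≤ k)
    (hvk : p ^ padicValNat p k ∣ k) (hr2 : r ≤ p - 2) (n : ℕ) (hn : n % p = p - 1) :
    (p : ℤ) ^ padicValNat p k ∣ Acoef p (k - r) n := by
  set v := padicValNat p k with hv
  set q := p ^ v with hq
  have hppos : 0 < p := by omega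
  have hqpos : 0 < q := pow_pos hppos v
  -- rewrite the goal via ZMod
  have hcast : ((p : ℤ) ^ v) = ((q : ℕ) : ℤ) := by push_cast [hq]; ring
  rw [hcast, ← ZMod.intCast_zmod_eq_zero_iff_dvd]
  -- rewrite Acoef using geo
  have hAeq : Acoef p (k - r) n
      = coeff (R := ℤ) n (∏ i ∈ Finset.range (n + 1), (geo ℤ (p ^ i)) ^ (k - r)) := by
    unfold Acoef
    congr 2
    funext i
    rw [invOfUnit_eq_geo _ (pow_pos hppos i)]
  -- the structural identity over ℤ
  have hstruct : (∏ i ∈ Finset.range (n + 1), (geo ℤ (p ^ i)) ^ (k - r))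
      = (1 - X) ^ r * (geo ℤ 1 ^ k *
          ∏ i ∈ Finset.range n, (geo ℤ (p ^ (i + 1))) ^ (k - r)) := by
    rw [Finset.prod_range_succ']
    have h0 : (geo ℤ (p ^ 0)) ^ (k - r) = (1 - X) ^ r * geo ℤ 1 ^ k := by
      rw [pow_zero]
      have hk' : k = r + (k - r) := by omega
      calc (geo ℤ 1) ^ (k - r)
          = ((1 - X ^ 1) * geo ℤ 1) ^ r * (geo ℤ 1) ^ (k - r) := by
            rw [one_sub_mul_geo 1 one_pos, one_pow, one_mul]
        _ = (1 - X) ^ r * ((geo ℤ 1) ^ r * (geo ℤ 1) ^ (k - r)) := by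
            rw [mul_pow, pow_one]; ring
        _ = (1 - X) ^ r * geo ℤ 1 ^ k := by rw [← pow_add, ← hk']
    rw [h0]
    ring
  rw [hAeq, hstruct]
  -- push to ZMod q
  set φ : ℤ →+* ZMod q := Int.castRingHom (ZMod q) with hφ
  have hmapcoeff : ((coeff (R := ℤ) n ((1 - X) ^ r * (geo ℤ 1 ^ k *
      ∏ i ∈ Finset.range n, (geo ℤ (p ^ (i + 1))) ^ (k - r))) : ℤ) : ZMod q)
      = coeff (R := ZMod q) n ((1 - X) ^ r * (geo (ZMod q) 1 ^ k *
          ∏ i ∈ Finset.range n, (geo (ZMod q) (p ^ (i + 1))) ^ (k - r))) := by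
    have hc : ∀ F : ℤ⟦X⟧, ((coeff (R := ℤ) n F : ℤ) : ZMod q) = coeff (R := ZMod q) n (PowerSeries.map φ F) := by
      intro F
      rw [coeff_map]
      rfl
    rw [hc]
    congr 1
    rw [map_mul, map_mul, map_pow, map_pow, map_sub, map_one, PowerSeries.map_X,
      map_geo, map_prod]
    refine congrArg₂ (· * ·) rfl (congrArg₂ (· * ·) rfl (Finset.prod_congr rfl fun i _ => ?_))
    rw [map_pow, map_geo]
  rw [hmapcoeff]
  -- the right factor is supported on multiples of p
  have hW : PSupp p ((geo (ZMod q) 1 ^ k *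
      ∏ i ∈ Finset.range n, (geo (ZMod q) (p ^ (i + 1))) ^ (k - r))) := by
    apply PSupp.mul
    · -- geo 1 ^ k
      intro m hm
      obtain ⟨k', rfl⟩ : ∃ k', k = k' + 1 := ⟨k - 1, by omega⟩
      rw [coeff_geo_one_pow]
      have hm1 : 1 ≤ m := by
        rcases Nat.eq_zero_or_pos m with rfl | h
        · exact absurd (dvd_zero p) hm
        · exact h
      -- q ∣ (m + k').choose m
      have hid := Nat.choose_succ_right_eq (m + k') (m - 1)
      have hm' : m - 1 + 1 = m := by omega
      rw [hm'] at hid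
      have hsub : m + k' - (m - 1) = k' + 1 := by omega
      rw [hsub] at hid
      have hdvd1 : q ∣ (m + k').choose m * m := by
        rw [hid]
        exact Dvd.dvd.mul_left hvk _
      have hcop : Nat.Coprime q m := by
        apply Nat.Coprime.pow_left
        exact (Nat.Prime.coprime_iff_not_dvd hp).mpr hm
      have hdvd2 : q ∣ (m + k').choose m := hcop.dvd_of_dvd_mul_right hdvd1
      rw [ZMod.natCast_eq_zero_iff]
      exact hdvd2
    · -- product of geo (p^{i+1})
      have : ∀ i ∈ Finset.range n, PSupp p ((geo (ZMod q) (p ^ (i + 1))) ^ (k - r)) := by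
        intro i _
        exact (PSupp.geo_pow (dvd_pow_self p (Nat.succ_ne_zero i))).pow _
      refine Finset.prod_induction _ _ (fun f g hf hg => hf.mul hg) (PSupp.one p) this
  -- final coefficient computation
  rw [coeff_mul]
  apply Finset.sum_eq_zero
  rintro ⟨a, b⟩ hab
  rw [HasAntidiagonal.mem_antidiagonal] at hab
  by_cases ha : a ≤ r
  · have hb : ¬ p ∣ b := by
      rintro ⟨c, rfl⟩
      have hab' : a + p * c = n := hab
      have hdm := Nat.div_add_mod n p
      rw [hn] at hdm
      have h1 : p ∣ (p * c - p * (n / p)) := Nat.dvd_sub ⟨c, rfl⟩ ⟨n / p, rfl⟩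
      obtain ⟨M, hMdef⟩ : ∃ M, M = p * (n / p) := ⟨_, rfl⟩
      obtain ⟨N, hNdef⟩ : ∃ N, N = p * c := ⟨_, rfl⟩
      rw [← hMdef] at hdm h1
      rw [← hNdef] at h1 hab'
      have h2 : N - M = p - 1 - a := by omega
      rw [h2] at h1
      have h3 := Nat.le_of_dvd (by omega) h1
      omega
    rw [hW b hb, mul_zero]
  · rw [coeff_one_sub_X_pow (by omega), zero_mul]

theorem stmt16 (p k r : ℕ) (hp : p.Prime) (hp3 : 3 ≤ p) (hk : 1 ≤ k)
    (hdvd : p ^ 2 * (p - 1) ∣ k) (hr1 : 1 ≤ r) (hr2 : r ≤ p - 2) :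
    {n : ℕ | 0 < n ∧
      (padicValNat p k : ℕ∞) ≤ emultiplicity (p : ℤ) (Acoef p (k - r) n)}.Infinite := by
  have hppos : 0 < p := by omega
  have hrk : r ≤ k := by
    have h1 : p ^ 2 * (p - 1) ≤ k := Nat.le_of_dvd (by omega) hdvd
    have h2 : p ≤ p ^ 2 := Nat.le_self_pow (by norm_num) p
    have h3 : p ^ 2 ≤ p ^ 2 * (p - 1) := Nat.le_mul_of_pos_right _ (by omega)
    omega
  apply Set.infinite_of_injective_forall_mem (f := fun j : ℕ => p * j + (p - 1))
  · intro a b hab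
    simp only at hab
    exact Nat.eq_of_mul_eq_mul_left hppos (by omega)
  · intro j
    constructor
    · have : 2 ≤ p - 1 := by omega
      omega
    · have hmod : (p * j + (p - 1)) % p = p - 1 := by
        rw [Nat.mul_add_mod]
        exact Nat.mod_eq_of_lt (by omega)
      have hdvd' := key_dvd p k r hp hp3 hrk hk pow_padicValNat_dvd hr2 _ hmod
      exact le_emultiplicity_of_pow_dvd hdvd'
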